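/- The monoid of 2×2 upper triangular tropical matrices over ℤ ∪ {-∞} satisfies Adian's identity: for all matrices X, Y, XY²X(XY)XY²X = XY²X(YX)XY²X. -/

import Mathlib

/-- The max-plus tropical semiring `ℤ ∪ {-∞}`: tropical addition is `max`,
tropical multiplication is `+`, and `(0 : T)` is the tropical zero `-∞`. -/
abbrev T : Type := Tropical (WithTop ℤᵒᵈ)

/-- The element of the tropical semiring corresponding to the integer `k`. -/
def t (k : ℤ) : T := Tropical.trop ((OrderDual.toDual k : ℤᵒᵈ) : WithTop ℤᵒᵈ)

lemma adian_aux0 {α : Type*} [AddCommGroup α] [LinearOrder α] [IsOrderedAddMonoid α] (x y z : α)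
    (h : x + x + x = y + y + z) : y ≤ x ∨ z ≤ x := by
  by_contra hc
  push_neg at hc
  exact (ne_of_lt (add_lt_add (add_lt_add hc.1 hc.1) hc.2)) h

lemma adian_aux (x y z : WithTop ℤᵒᵈ) (h : x + x + x = y + y + z) : min y z ≤ x := by
  induction x using WithTop.recTopCoe with
  | top => exact le_top
  | coe x =>
    induction y using WithTop.recTopCoe with
    | top => simp at h
    | coe y =>
      induction z using WithTop.recTopCoe with
      | top => simp at h
      | coe z =>
        rw [← WithTop.coe_add, ← WithTop.coe_add, ← WithTop.coe_add, ← WithTop.coe_add,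
          WithTop.coe_eq_coe] at h
        rw [← WithTop.coe_min, WithTop.coe_le_coe]
        rcases adian_aux0 x y z h with h' | h'
        · exact min_le_of_left_le h'
        · exact min_le_of_right_le h'

/-- Tropical domination: if `u³ = v²w` then `u` is absorbed by `v + w`. -/
lemma adian_dom3 (u v w : T) (h : u * u * u = v * v * w) : u + (v + w) = v + w := by
  apply Tropical.add_eq_right
  rw [← Tropical.untrop_le_iff, Tropical.untrop_add]
  apply adian_aux
  have := congrArg Tropical.untrop h
  simpa only [Tropical.untrop_mul] using this

/-- Tropical domination: if `u³ = vw²` then `u` is absorbed by `v + w`. -/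
lemma adian_dom3' (u v w : T) (h : u * u * u = v * w * w) : u + (v + w) = v + w := by
  rw [add_comm v w]
  exact adian_dom3 u w v (by rw [h]; ring)

/-- The scalar heart of Adian's identity for `UT₂` tropical matrices. -/
lemma adian_key (a b c d e f : T) :
    a^2*d^2 * (a*d) * (a*b*d^2 + a*c*d*e + a*c*e*f + b*c*f^2)
      + a^2*d^2 * (a*e + b*f) * (c^2*f^2)
      + (a*b*d^2 + a*c*d*e + a*c*e*f + b*c*f^2) * (c*f) * (c^2*f^2)
    = a^2*d^2 * (a*d) * (a*b*d^2 + a*c*d*e + a*c*e*f + b*c*f^2)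
      + a^2*d^2 * (b*d + c*e) * (c^2*f^2)
      + (a*b*d^2 + a*c*d*e + a*c*e*f + b*c*f^2) * (c*f) * (c^2*f^2) := by
  have e1 : (a^2*d^2*(a*e)*(c^2*f^2)) + ((a^3*d^3*(a*c*e*f)) + ((a*c*e*f)*(c^3*f^3)))
      = (a^3*d^3*(a*c*e*f)) + ((a*c*e*f)*(c^3*f^3)) := adian_dom3 _ _ _ (by ring)
  have e2 : (a^2*d^2*(b*f)*(c^2*f^2)) + ((a^3*d^3*(b*c*f^2)) + ((b*c*f^2)*(c^3*f^3)))
      = (a^3*d^3*(b*c*f^2)) + ((b*c*f^2)*(c^3*f^3)) := adian_dom3 _ _ _ (by ring)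
  have e3 : (a^2*d^2*(b*d)*(c^2*f^2)) + ((a^3*d^3*(a*b*d^2)) + ((a*b*d^2)*(c^3*f^3)))
      = (a^3*d^3*(a*b*d^2)) + ((a*b*d^2)*(c^3*f^3)) := adian_dom3' _ _ _ (by ring)
  have e4 : (a^2*d^2*(c*e)*(c^2*f^2)) + ((a^3*d^3*(a*c*d*e)) + ((a*c*d*e)*(c^3*f^3)))
      = (a^3*d^3*(a*c*d*e)) + ((a*c*d*e)*(c^3*f^3)) := adian_dom3' _ _ _ (by ring)
  calc a^2*d^2 * (a*d) * (a*b*d^2 + a*c*d*e + a*c*e*f + b*c*f^2)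
      + a^2*d^2 * (a*e + b*f) * (c^2*f^2)
      + (a*b*d^2 + a*c*d*e + a*c*e*f + b*c*f^2) * (c*f) * (c^2*f^2)
      = ((a^2*d^2*(a*e)*(c^2*f^2)) + ((a^3*d^3*(a*c*e*f)) + ((a*c*e*f)*(c^3*f^3))))
        + ((a^2*d^2*(b*f)*(c^2*f^2)) + ((a^3*d^3*(b*c*f^2)) + ((b*c*f^2)*(c^3*f^3))))
        + ((a^3*d^3*(a*b*d^2)) + ((a*b*d^2)*(c^3*f^3)))
        + ((a^3*d^3*(a*c*d*e)) + ((a*c*d*e)*(c^3*f^3))) := by ring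
    _ = ((a^3*d^3*(a*c*e*f)) + ((a*c*e*f)*(c^3*f^3)))
        + ((a^3*d^3*(b*c*f^2)) + ((b*c*f^2)*(c^3*f^3)))
        + ((a^3*d^3*(a*b*d^2)) + ((a*b*d^2)*(c^3*f^3)))
        + ((a^3*d^3*(a*c*d*e)) + ((a*c*d*e)*(c^3*f^3))) := by rw [e1, e2]
    _ = ((a^2*d^2*(b*d)*(c^2*f^2)) + ((a^3*d^3*(a*b*d^2)) + ((a*b*d^2)*(c^3*f^3))))
        + ((a^2*d^2*(c*e)*(c^2*f^2)) + ((a^3*d^3*(a*c*d*e)) + ((a*c*d*e)*(c^3*f^3))))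
        + ((a^3*d^3*(a*c*e*f)) + ((a*c*e*f)*(c^3*f^3)))
        + ((a^3*d^3*(b*c*f^2)) + ((b*c*f^2)*(c^3*f^3))) := by rw [e3, e4]; ring
    _ = _ := by ring

/-- The monoid of `2 × 2` upper triangular tropical matrices (those whose
`(2,1)` entry is `-∞`) satisfies Adian's identity `xy²x(xy)xy²x = xy²x(yx)xy²x`. -/
theorem upperTriangular_satisfies_adian_identity
    (X Y : Matrix (Fin 2) (Fin 2) T) (hX : X 1 0 = 0) (hY : Y 1 0 = 0) :
    X * Y ^ 2 * X * (X * Y) * (X * Y ^ 2 * X) =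
      X * Y ^ 2 * X * (Y * X) * (X * Y ^ 2 * X) := by
  have hXm : X = !![X 0 0, X 0 1; 0, X 1 1] := by
    ext i j; fin_cases i <;> fin_cases j <;> simp [hX]
  have hYm : Y = !![Y 0 0, Y 0 1; 0, Y 1 1] := by
    ext i j; fin_cases i <;> fin_cases j <;> simp [hY]
  set a := X 0 0; set b := X 0 1; set c := X 1 1
  set d := Y 0 0; set e := Y 0 1; set f := Y 1 1
  rw [hXm, hYm, pow_two]
  simp only [Matrix.mul_fin_two]
  ext i j
  fin_cases i <;> fin_cases j <;> simp only [Fin.zero_eta, Fin.mk_one,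
    Matrix.cons_val', Matrix.cons_val_zero, Matrix.cons_val_one, Matrix.head_cons,
    Matrix.empty_val', Matrix.cons_val_fin_one, Matrix.head_fin_const, Matrix.of_apply]
  · ring
  · calc _ = a^2*d^2 * (a*d) * (a*b*d^2 + a*c*d*e + a*c*e*f + b*c*f^2)
          + a^2*d^2 * (a*e + b*f) * (c^2*f^2)
          + (a*b*d^2 + a*c*d*e + a*c*e*f + b*c*f^2) * (c*f) * (c^2*f^2) := by ring
      _ = a^2*d^2 * (a*d) * (a*b*d^2 + a*c*d*e + a*c*e*f + b*c*f^2)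
          + a^2*d^2 * (b*d + c*e) * (c^2*f^2)
          + (a*b*d^2 + a*c*d*e + a*c*e*f + b*c*f^2) * (c*f) * (c^2*f^2) :=
        adian_key a b c d e f
      _ = _ := by ring
  · ring
  · ring
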